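/- Let D ⊆ ℝ^n be a compact convex set, let T > 0 and L > 0, and let f : ℝ^n × ℝ → ℝ^n be Lipschitz continuous in (x,t) jointly on D × ℝ and T-periodic in its second argument. Define the averaged vector field f̄(y) = (1/T) ∫₀ᵀ f(y, τ) dτ. Then there exist constants C > 0 and ε₀ > 0 such that for every ε with 0 < ε ≤ ε₀ and every pair of differentiable curves x, y : [0, L/ε] → D satisfying x'(t) = ε · f(x(t), t) and y'(t) = ε · f̄(y(t)) for all t ∈ [0, L/ε] with the same initial value x(0) = y(0) = a ∈ D, one has ‖x(t) − y(t)‖ ≤ C · ε for all t ∈ [0, L/ε]. -/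

import Mathlib

open Set intervalIntegral MeasureTheory


/-- **Averaging Theorem** (Lemma 2.1.8 of Sanders–Verhulst–Murdock).
For a vector field `f : ℝⁿ × ℝ → ℝⁿ` that is jointly Lipschitz on `D × ℝ`
(with `D ⊆ ℝⁿ` compact and convex) and `T`-periodic in time, the solution of
the averaged system `ẏ = ε f̄(y)`, where `f̄(y) = (1/T) ∫₀ᵀ f(y,τ) dτ`,
approximates the solution of `ẋ = ε f(x,t)` with the same initial value to
order `O(ε)` on the timescale `1/ε`. -/
theorem averaging_theorem
    (n : ℕ) (D : Set (EuclideanSpace ℝ (Fin n)))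
    (hDcompact : IsCompact D) (hDconvex : Convex ℝ D)
    (T L : ℝ) (hT : 0 < T) (hL : 0 < L)
    (f : EuclideanSpace ℝ (Fin n) × ℝ → EuclideanSpace ℝ (Fin n))
    (K : NNReal) (hLip : LipschitzOnWith K f (D ×ˢ (Set.univ : Set ℝ)))
    (hper : ∀ x : EuclideanSpace ℝ (Fin n), ∀ t : ℝ, f (x, t + T) = f (x, t))
    (fbar : EuclideanSpace ℝ (Fin n) → EuclideanSpace ℝ (Fin n))
    (hfbar : ∀ y, fbar y = (1 / T) • ∫ τ in (0:ℝ)..T, f (y, τ)) :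
    ∃ C > (0:ℝ), ∃ ε₀ > (0:ℝ),
      ∀ ε : ℝ, 0 < ε → ε ≤ ε₀ →
        ∀ (a : EuclideanSpace ℝ (Fin n)), a ∈ D →
          ∀ x y : ℝ → EuclideanSpace ℝ (Fin n),
            (∀ t ∈ Set.Icc (0:ℝ) (L / ε), x t ∈ D) →
            (∀ t ∈ Set.Icc (0:ℝ) (L / ε), y t ∈ D) →
            (∀ t ∈ Set.Icc (0:ℝ) (L / ε), HasDerivAt x (ε • f (x t, t)) t) →
            (∀ t ∈ Set.Icc (0:ℝ) (L / ε), HasDerivAt y (ε • fbar (y t)) t) →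
            x 0 = a → y 0 = a →
            ∀ t ∈ Set.Icc (0:ℝ) (L / ε), ‖x t - y t‖ ≤ C * ε := by
  classical
  have hfc : ContinuousOn f (D ×ˢ (Set.univ : Set ℝ)) := hLip.continuousOn
  -- a bound on ‖f‖ on D × ℝ
  obtain ⟨M₀, hM₀⟩ := (hDcompact.prod isCompact_Icc).exists_bound_of_continuousOn
      (hfc.mono (Set.prod_mono_right (Set.subset_univ (Set.Icc 0 T))))
  set M : ℝ := max M₀ 1 with hMdef
  have hMpos : (0:ℝ) < M := lt_of_lt_of_le one_pos (le_max_right _ _)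
  have hfbound : ∀ c ∈ D, ∀ t : ℝ, ‖f (c, t)‖ ≤ M := by
    intro c hc t
    have hper' : Function.Periodic (fun s => f (c, s)) T := fun s => hper c s
    obtain ⟨s, hs, he⟩ := hper'.exists_mem_Ico₀ hT t
    calc ‖f (c, t)‖ = ‖f (c, s)‖ := by rw [show f (c,t) = f (c,s) from he]
      _ ≤ M₀ := hM₀ (c, s) ⟨hc, hs.1, hs.2.le⟩
      _ ≤ M := le_max_left _ _
  -- Lipschitz in space, uniformly in time
  have hLipx : ∀ t : ℝ, ∀ c₁ ∈ D, ∀ c₂ ∈ D, ‖f (c₁, t) - f (c₂, t)‖ ≤ K * ‖c₁ - c₂‖ := by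
    intro t c₁ h1 c₂ h2
    have h := hLip.dist_le_mul (c₁, t) ⟨h1, trivial⟩ (c₂, t) ⟨h2, trivial⟩
    have hd : dist ((c₁, t) : _ × ℝ) (c₂, t) = dist c₁ c₂ := by
      rw [Prod.dist_eq]; simp [dist_nonneg]
    rw [hd, dist_eq_norm, dist_eq_norm] at h
    exact h
  -- continuity in time for fixed base point in D
  have hcontt : ∀ c ∈ D, Continuous (fun s : ℝ => f (c, s)) := by
    intro c hc
    refine LipschitzWith.continuous (K := K) ?_
    refine LipschitzWith.of_dist_le_mul fun s₁ s₂ => ?_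
    have h := hLip.dist_le_mul (c, s₁) ⟨hc, trivial⟩ (c, s₂) ⟨hc, trivial⟩
    have hd : dist ((c, s₁) : _ × ℝ) (c, s₂) = dist s₁ s₂ := by
      rw [Prod.dist_eq]; simp [dist_nonneg]
    rwa [hd] at h
  have hintf : ∀ c ∈ D, ∀ a b : ℝ, IntervalIntegrable (fun s => f (c, s)) volume a b :=
    fun c hc a b => ((hcontt c hc).continuousOn).intervalIntegrable
  -- bound and Lipschitz property of fbar
  have hfbarbound : ∀ c ∈ D, ‖fbar c‖ ≤ M := by
    intro c hc
    rw [hfbar, norm_smul]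
    have h1 : ‖∫ τ in (0:ℝ)..T, f (c, τ)‖ ≤ M * |T - 0| :=
      intervalIntegral.norm_integral_le_of_norm_le_const fun s _ => hfbound c hc s
    rw [sub_zero, abs_of_pos hT] at h1
    have : |1 / T| = 1 / T := abs_of_pos (by positivity)
    rw [Real.norm_eq_abs, this]
    calc 1 / T * ‖∫ τ in (0:ℝ)..T, f (c, τ)‖ ≤ 1 / T * (M * T) := by
          apply mul_le_mul_of_nonneg_left h1 (by positivity)
      _ = M := by field_simp
  have hfbarLip : ∀ c₁ ∈ D, ∀ c₂ ∈ D, ‖fbar c₁ - fbar c₂‖ ≤ K * ‖c₁ - c₂‖ := by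
    intro c₁ h1 c₂ h2
    rw [hfbar, hfbar, ← smul_sub, ← intervalIntegral.integral_sub (hintf c₁ h1 0 T) (hintf c₂ h2 0 T)]
    have hb : ‖∫ τ in (0:ℝ)..T, (f (c₁, τ) - f (c₂, τ))‖ ≤ (K * ‖c₁ - c₂‖) * |T - 0| :=
      intervalIntegral.norm_integral_le_of_norm_le_const fun s _ => hLipx s c₁ h1 c₂ h2
    rw [sub_zero, abs_of_pos hT] at hb
    rw [norm_smul, Real.norm_eq_abs, abs_of_pos (show (0:ℝ) < 1/T by positivity)]
    calc 1 / T * ‖∫ τ in (0:ℝ)..T, (f (c₁, τ) - f (c₂, τ))‖ ≤ 1 / T * (K * ‖c₁ - c₂‖ * T) := by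
          apply mul_le_mul_of_nonneg_left hb (by positivity)
      _ = K * ‖c₁ - c₂‖ := by field_simp
  have hfbarcont : ContinuousOn fbar D := by
    refine LipschitzOnWith.continuousOn (K := K) ?_
    refine LipschitzOnWith.of_dist_le_mul fun c₁ h1 c₂ h2 => ?_
    rw [dist_eq_norm, dist_eq_norm]; exact hfbarLip c₁ h1 c₂ h2
  -- the constants
  set B : ℝ := 2 * K * M * T * L + 2 * M * T with hBdef
  have hBpos : 0 < B := by positivity
  set C : ℝ := B * (Real.exp (K * L) + 1) with hCdef
  have hCpos : 0 < C := by positivity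
  refine ⟨C, hCpos, 1, one_pos, ?_⟩
  intro ε hε hε1 a ha x y hxD hyD hx' hy' hx0 hy0
  set b : ℝ := L / ε with hbdef
  have hbpos : 0 < b := div_pos hL hε
  have hεle : ∀ t ∈ Set.Icc 0 b, ε * t ≤ L := by
    intro t ht
    have h2 := ht.2
    rw [hbdef, le_div_iff₀ hε] at h2
    linarith [h2]
  have hxcont : ContinuousOn x (Set.Icc 0 b) :=
    fun t ht => ((hx' t ht).continuousAt).continuousWithinAt
  have hycont : ContinuousOn y (Set.Icc 0 b) :=
    fun t ht => ((hy' t ht).continuousAt).continuousWithinAt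
  -- y moves slowly
  have hyslow : ∀ s₁ ∈ Set.Icc 0 b, ∀ s₂ ∈ Set.Icc 0 b, ‖y s₂ - y s₁‖ ≤ ε * M * |s₂ - s₁| := by
    intro s₁ h1 s₂ h2
    have := (convex_Icc (0:ℝ) b).norm_image_sub_le_of_norm_hasDerivWithin_le
      (f := y) (f' := fun t => ε • fbar (y t))
      (fun t ht => (hy' t ht).hasDerivWithinAt)
      (fun t ht => by
        rw [norm_smul, Real.norm_eq_abs, abs_of_pos hε]
        exact mul_le_mul_of_nonneg_left (hfbarbound _ (hyD t ht)) hε.le)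
      h1 h2
    simpa [Real.norm_eq_abs] using this
  -- the fluctuating part
  set g : ℝ → EuclideanSpace ℝ (Fin n) := fun s => f (y s, s) - fbar (y s) with hgdef
  have hgcont : ContinuousOn g (Set.Icc 0 b) := by
    have h1 : ContinuousOn (fun s => f (y s, s)) (Set.Icc 0 b) := by
      apply hfc.comp (hycont.prodMk continuousOn_id)
      intro s hs; exact ⟨hyD s hs, trivial⟩
    have h2 : ContinuousOn (fun s => fbar (y s)) (Set.Icc 0 b) :=
      hfbarcont.comp hycont fun s hs => hyD s hs
    exact h1.sub h2
  have hgbound : ∀ s ∈ Set.Icc 0 b, ‖g s‖ ≤ 2 * M := by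
    intro s hs
    calc ‖g s‖ ≤ ‖f (y s, s)‖ + ‖fbar (y s)‖ := norm_sub_le _ _
      _ ≤ M + M := add_le_add (hfbound _ (hyD s hs) s) (hfbarbound _ (hyD s hs))
      _ = 2 * M := by ring
  have hgint : ∀ s₁ ∈ Set.Icc (0:ℝ) b, ∀ s₂ ∈ Set.Icc (0:ℝ) b,
      IntervalIntegrable g volume s₁ s₂ := fun s₁ h1 s₂ h2 =>
    (hgcont.mono (Set.uIcc_subset_Icc h1 h2)).intervalIntegrable
  -- estimate over one period
  have hperiod : ∀ s₁, 0 ≤ s₁ → s₁ + T ≤ b →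
      ‖∫ s in s₁..s₁ + T, g s‖ ≤ 2 * (K * (ε * M * T)) * T := by
    intro s₁ h0 hTb
    have hs₁ : s₁ ∈ Set.Icc 0 b := ⟨h0, by linarith⟩
    have hs₁T : s₁ + T ∈ Set.Icc 0 b := ⟨by linarith, hTb⟩
    have hmemIcc : ∀ s ∈ Set.uIoc s₁ (s₁ + T), s ∈ Set.Icc 0 b := by
      intro s hs
      rw [Set.uIoc_of_le (by linarith : s₁ ≤ s₁ + T)] at hs
      exact ⟨by linarith [hs.1], by linarith [hs.2]⟩
    have hyD₁ : y s₁ ∈ D := hyD s₁ hs₁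
    -- integrabilities
    have hint1 : IntervalIntegrable (fun s => f (y s, s) - f (y s₁, s)) volume s₁ (s₁ + T) := by
      apply ContinuousOn.intervalIntegrable
      apply ContinuousOn.sub
      · apply (hfc.comp (hycont.prodMk continuousOn_id) fun s hs => ⟨hyD s hs, trivial⟩).mono
        exact Set.uIcc_subset_Icc hs₁ hs₁T
      · exact (hcontt _ hyD₁).continuousOn
    have hint2 : IntervalIntegrable (fun s => fbar (y s₁) - fbar (y s)) volume s₁ (s₁ + T) := by
      apply ContinuousOn.intervalIntegrable
      apply ContinuousOn.sub continuousOn_const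
      exact ((hfbarcont.comp hycont fun s hs => hyD s hs).mono (Set.uIcc_subset_Icc hs₁ hs₁T))
    have hint3 : IntervalIntegrable (fun s => f (y s₁, s) - fbar (y s₁)) volume s₁ (s₁ + T) :=
      ((hcontt _ hyD₁).sub continuous_const).intervalIntegrable _ _
    -- the middle integral vanishes
    have hmid : ∫ s in s₁..s₁ + T, (f (y s₁, s) - fbar (y s₁)) = 0 := by
      rw [intervalIntegral.integral_sub ((hcontt _ hyD₁).intervalIntegrable _ _)
        (intervalIntegrable_const), intervalIntegral.integral_const]
      have hper' : Function.Periodic (fun s => f (y s₁, s)) T := fun s => hper _ s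
      rw [hper'.intervalIntegral_add_eq s₁ 0, zero_add]
      have : (∫ τ in (0:ℝ)..T, f (y s₁, τ)) = T • fbar (y s₁) := by
        rw [hfbar, smul_smul]
        rw [mul_one_div, div_self hT.ne', one_smul]
      rw [this, add_sub_cancel_left, sub_self]
    -- decompose g
    have hsplit : (∫ s in s₁..s₁ + T, g s)
        = (∫ s in s₁..s₁ + T, (f (y s, s) - f (y s₁, s)))
          + (∫ s in s₁..s₁ + T, (fbar (y s₁) - fbar (y s))) := by
      rw [← intervalIntegral.integral_add hint1 hint2]
      have : (∫ s in s₁..s₁ + T, g s)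
          = (∫ s in s₁..s₁ + T, ((f (y s, s) - f (y s₁, s)) + (fbar (y s₁) - fbar (y s))))
            + ∫ s in s₁..s₁ + T, (f (y s₁, s) - fbar (y s₁)) := by
        rw [← intervalIntegral.integral_add (hint1.add hint2) hint3]
        apply intervalIntegral.integral_congr
        intro s _
        simp only [hgdef]
        abel
      rw [this, hmid, add_zero]
    -- bound the two pieces
    have hb1 : ‖∫ s in s₁..s₁ + T, (f (y s, s) - f (y s₁, s))‖ ≤ K * (ε * M * T) * T := by
      have := intervalIntegral.norm_integral_le_of_norm_le_const
        (C := K * (ε * M * T)) (f := fun s => f (y s, s) - f (y s₁, s)) (a := s₁) (b := s₁ + T) ?_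
      · rwa [add_sub_cancel_left, abs_of_pos hT] at this
      · intro s hs
        have hsI := hmemIcc s hs
        rw [Set.uIoc_of_le (by linarith : s₁ ≤ s₁ + T)] at hs
        calc ‖f (y s, s) - f (y s₁, s)‖ ≤ K * ‖y s - y s₁‖ := hLipx s _ (hyD s hsI) _ hyD₁
          _ ≤ K * (ε * M * |s - s₁|) := by
              apply mul_le_mul_of_nonneg_left (hyslow s₁ hs₁ s hsI) K.coe_nonneg
          _ ≤ K * (ε * M * T) := by
              apply mul_le_mul_of_nonneg_left _ K.coe_nonneg
              apply mul_le_mul_of_nonneg_left _ (by positivity)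
              rw [abs_of_nonneg (by linarith [hs.1] : (0:ℝ) ≤ s - s₁)]
              linarith [hs.2]
    have hb2 : ‖∫ s in s₁..s₁ + T, (fbar (y s₁) - fbar (y s))‖ ≤ K * (ε * M * T) * T := by
      have := intervalIntegral.norm_integral_le_of_norm_le_const
        (C := K * (ε * M * T)) (f := fun s => fbar (y s₁) - fbar (y s)) (a := s₁) (b := s₁ + T) ?_
      · rwa [add_sub_cancel_left, abs_of_pos hT] at this
      · intro s hs
        have hsI := hmemIcc s hs
        rw [Set.uIoc_of_le (by linarith : s₁ ≤ s₁ + T)] at hs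
        calc ‖fbar (y s₁) - fbar (y s)‖ ≤ K * ‖y s₁ - y s‖ := hfbarLip _ hyD₁ _ (hyD s hsI)
          _ ≤ K * (ε * M * |s₁ - s|) := by
              apply mul_le_mul_of_nonneg_left _ K.coe_nonneg
              have := hyslow s hsI s₁ hs₁
              simpa using this
          _ ≤ K * (ε * M * T) := by
              apply mul_le_mul_of_nonneg_left _ K.coe_nonneg
              apply mul_le_mul_of_nonneg_left _ (by positivity)
              rw [abs_sub_comm, abs_of_nonneg (by linarith [hs.1] : (0:ℝ) ≤ s - s₁)]
              linarith [hs.2]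
    calc ‖∫ s in s₁..s₁ + T, g s‖
        ≤ ‖∫ s in s₁..s₁ + T, (f (y s, s) - f (y s₁, s))‖
          + ‖∫ s in s₁..s₁ + T, (fbar (y s₁) - fbar (y s))‖ := by
          rw [hsplit]; exact norm_add_le _ _
      _ ≤ K * (ε * M * T) * T + K * (ε * M * T) * T := add_le_add hb1 hb2
      _ = 2 * (K * (ε * M * T)) * T := by ring
  -- cumulative estimate on the primitive of g
  have hΦkey : ∀ N : ℕ, ∀ t ∈ Set.Icc (0:ℝ) b, t ≤ (N + 1) * T →
      ‖∫ s in (0:ℝ)..t, g s‖ ≤ 2 * (K * (ε * M * T)) * t + 2 * M * T := by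
    intro N
    induction N with
    | zero =>
      intro t ht htT
      have h1 : ‖∫ s in (0:ℝ)..t, g s‖ ≤ 2 * M * |t - 0| := by
        apply intervalIntegral.norm_integral_le_of_norm_le_const
        intro s hs
        apply hgbound
        rw [Set.uIoc_of_le ht.1] at hs
        exact ⟨hs.1.le, le_trans hs.2 ht.2⟩
      rw [sub_zero, abs_of_nonneg ht.1] at h1
      have h2 : 2 * M * t ≤ 2 * M * T := by
        apply mul_le_mul_of_nonneg_left _ (by positivity)
        simpa using htT
      have h3 : 0 ≤ 2 * (K * (ε * M * T)) * t := mul_nonneg (by positivity) ht.1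
      linarith
    | succ N ih =>
      intro t ht htT
      by_cases hcase : t ≤ (N + 1) * T
      · exact ih t ht hcase
      push_neg at hcase
      have hT1 : T ≤ (N + 1) * T := by nlinarith [hT.le]
      have ht' : t - T ∈ Set.Icc (0:ℝ) b := ⟨by linarith, by linarith [ht.2]⟩
      have ht'T : t - T ≤ (N + 1) * T := by push_cast; push_cast at htT; linarith
      have hsplit : (∫ s in (0:ℝ)..t, g s)
          = (∫ s in (0:ℝ)..(t - T), g s) + ∫ s in (t - T)..t, g s :=
        (intervalIntegral.integral_add_adjacent_intervals
          (hgint 0 ⟨le_refl 0, hbpos.le⟩ (t - T) ht') (hgint (t - T) ht' t ht)).symm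
      have hper' : ‖∫ s in (t - T)..t, g s‖ ≤ 2 * (K * (ε * M * T)) * T := by
        have := hperiod (t - T) ht'.1 (by rw [sub_add_cancel]; exact ht.2)
        rwa [sub_add_cancel] at this
      calc ‖∫ s in (0:ℝ)..t, g s‖
          ≤ ‖∫ s in (0:ℝ)..(t - T), g s‖ + ‖∫ s in (t - T)..t, g s‖ := by
            rw [hsplit]; exact norm_add_le _ _
        _ ≤ (2 * (K * (ε * M * T)) * (t - T) + 2 * M * T) + 2 * (K * (ε * M * T)) * T :=
            add_le_add (ih (t - T) ht' ht'T) hper'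
        _ = 2 * (K * (ε * M * T)) * t + 2 * M * T := by ring
  have hΦB : ∀ t ∈ Set.Icc (0:ℝ) b, ‖∫ s in (0:ℝ)..t, g s‖ ≤ B := by
    intro t ht
    obtain ⟨N, hN⟩ := exists_nat_ge (t / T)
    have htN : t ≤ (N + 1) * T := by
      rw [div_le_iff₀ hT] at hN
      nlinarith [hT.le]
    have h1 := hΦkey N t ht htN
    have h2 : 2 * (K * (ε * M * T)) * t ≤ 2 * K * M * T * L := by
      have h3 := hεle t ht
      have : 2 * (K * (ε * M * T)) * t = 2 * K * M * T * (ε * t) := by ring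
      rw [this]
      apply mul_le_mul_of_nonneg_left h3 (by positivity)
    rw [hBdef]
    linarith
  -- the comparison function u for Grönwall
  set u : ℝ → EuclideanSpace ℝ (Fin n) :=
    fun t => x t - y t - ε • ∫ s in (0:ℝ)..t, g s with hudef
  have hucont : ContinuousOn u (Set.Icc 0 b) := by
    apply (hxcont.sub hycont).sub
    show ContinuousOn (ε • fun r => ∫ s in (0:ℝ)..r, g s) _
    apply ContinuousOn.const_smul
    have hig : MeasureTheory.IntegrableOn g (Set.uIcc 0 b) volume := by
      rw [Set.uIcc_of_le hbpos.le]
      exact hgcont.integrableOn_Icc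
    exact (intervalIntegral.continuousOn_primitive_interval hig).mono
      (by rw [Set.uIcc_of_le hbpos.le])
  have hIccmem : ∀ t ∈ Set.Ico (0:ℝ) b, Set.Icc (0:ℝ) b ∈ nhdsWithin t (Set.Ioi t) := by
    intro t ht
    apply mem_nhdsWithin.2
    exact ⟨Set.Iio b, isOpen_Iio, ht.2, fun s hs =>
      ⟨le_of_lt (lt_of_le_of_lt ht.1 hs.2), hs.1.le⟩⟩
  have hΦderiv : ∀ t ∈ Set.Ico (0:ℝ) b,
      HasDerivWithinAt (fun r => ∫ s in (0:ℝ)..r, g s) (g t) (Set.Ici t) t := by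
    intro t ht
    have htI : t ∈ Set.Icc (0:ℝ) b := ⟨ht.1, ht.2.le⟩
    refine intervalIntegral.integral_hasDerivWithinAt_right
      (hgint 0 ⟨le_refl 0, hbpos.le⟩ t htI) (s := Set.Ici t) (t := Set.Ioi t)
      ⟨Set.Icc 0 b, hIccmem t ht, hgcont.aestronglyMeasurable measurableSet_Icc⟩ ?_
    exact (hgcont t htI).mono_of_mem_nhdsWithin (hIccmem t ht)
  have huderiv : ∀ t ∈ Set.Ico (0:ℝ) b,
      HasDerivWithinAt u (ε • (f (x t, t) - f (y t, t))) (Set.Ici t) t := by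
    intro t ht
    have htI : t ∈ Set.Icc (0:ℝ) b := ⟨ht.1, ht.2.le⟩
    have hd := (((hx' t htI).hasDerivWithinAt (s := Set.Ici t)).sub
      ((hy' t htI).hasDerivWithinAt)).sub ((hΦderiv t ht).const_smul ε)
    refine hd.congr_deriv ?_
    show _ - _ - ε • (f (y t, t) - fbar (y t)) = _
    simp only [hgdef, smul_sub]
    abel
  have hxyu : ∀ t ∈ Set.Icc (0:ℝ) b, ‖x t - y t‖ ≤ ‖u t‖ + ε * B := by
    intro t ht
    have hxyeq : x t - y t = u t + ε • ∫ s in (0:ℝ)..t, g s := by rw [hudef]; beta_reduce; abel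
    rw [hxyeq]
    refine le_trans (norm_add_le _ _) ?_
    have h3 : ‖ε • ∫ s in (0:ℝ)..t, g s‖ ≤ ε * B := by
      rw [norm_smul, Real.norm_eq_abs, abs_of_pos hε]
      exact mul_le_mul_of_nonneg_left (hΦB t ht) hε.le
    linarith
  have hbound : ∀ t ∈ Set.Ico (0:ℝ) b,
      ‖ε • (f (x t, t) - f (y t, t))‖ ≤ ε * K * ‖u t‖ + ε * K * (ε * B) := by
    intro t ht
    have htI : t ∈ Set.Icc (0:ℝ) b := ⟨ht.1, ht.2.le⟩
    have h1 : ‖f (x t, t) - f (y t, t)‖ ≤ K * ‖x t - y t‖ :=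
      hLipx t _ (hxD t htI) _ (hyD t htI)
    have h2 := hxyu t htI
    rw [norm_smul, Real.norm_eq_abs, abs_of_pos hε]
    calc ε * ‖f (x t, t) - f (y t, t)‖ ≤ ε * (K * (‖u t‖ + ε * B)) := by
          apply mul_le_mul_of_nonneg_left _ hε.le
          exact le_trans h1 (mul_le_mul_of_nonneg_left h2 K.coe_nonneg)
      _ = ε * K * ‖u t‖ + ε * K * (ε * B) := by ring
  have hu0 : ‖u 0‖ ≤ 0 := by
    rw [hudef]
    simp [hx0, hy0, intervalIntegral.integral_same]
  have hgron := norm_le_gronwallBound_of_norm_deriv_right_le (a := 0) (b := b)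
    hucont huderiv hu0 hbound
  have hgb : ∀ t ∈ Set.Icc (0:ℝ) b,
      gronwallBound 0 (ε * ↑K) (ε * ↑K * (ε * B)) (t - 0) ≤ ε * (B * Real.exp (↑K * L)) := by
    intro t ht
    rw [sub_zero]
    by_cases hK : (K:ℝ) = 0
    · rw [hK]
      simp only [mul_zero, zero_mul, gronwallBound_K0, zero_add]
      positivity
    · have hεK : ε * (K:ℝ) ≠ 0 := mul_ne_zero hε.ne' hK
      rw [gronwallBound_of_K_ne_0 hεK]
      have hdiv : ε * ↑K * (ε * B) / (ε * ↑K) = ε * B := by field_simp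
      rw [hdiv]
      have hKpos : (0:ℝ) < K := lt_of_le_of_ne K.coe_nonneg (Ne.symm hK)
      have hle : ε * ↑K * t ≤ ↑K * L := by
        have h3 := hεle t ht
        have : ε * ↑K * t = ↑K * (ε * t) := by ring
        rw [this]
        exact mul_le_mul_of_nonneg_left h3 hKpos.le
      have h1 : Real.exp (ε * ↑K * t) - 1 ≤ Real.exp (↑K * L) := by
        have := Real.exp_le_exp.2 hle
        linarith
      have h2 : Real.exp (ε * ↑K * t) - 1 ≥ 0 := by
        have : (0:ℝ) ≤ ε * ↑K * t := mul_nonneg (mul_nonneg hε.le K.coe_nonneg) ht.1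
        linarith [Real.one_le_exp this]
      have hεB : (0:ℝ) ≤ ε * B := by positivity
      have h4 : ε * B * (Real.exp (ε * ↑K * t) - 1) ≤ ε * B * Real.exp (↑K * L) :=
        mul_le_mul_of_nonneg_left h1 hεB
      calc 0 * Real.exp (ε * ↑K * t) + ε * B * (Real.exp (ε * ↑K * t) - 1)
          ≤ ε * B * Real.exp (↑K * L) := by rw [zero_mul, zero_add]; exact h4
        _ = ε * (B * Real.exp (↑K * L)) := by ring
  intro t ht
  have hut := hgron t ht
  have h2 := hgb t ht
  have h3 := hxyu t ht
  have hCe : C * ε = ε * (B * Real.exp (↑K * L)) + ε * B := by rw [hCdef]; ring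
  linarith
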